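/- arXiv:1602.02407 — 2 statements merged into one kernel-verified Lean document; each statement's English description precedes it below -/
import Mathlib

section
/- Let p be a prime. Then M_p^(1) ⊆ p · 𝒩_p; that is, for every positive integer n divisible by p but not by p² satisfying S_n(n) ≡ p (mod n), the quotient n/p belongs to 𝒩_p. -/
/-- `S k n = ∑_{i=1}^{n} i^k`. -/
def S (k n : ℕ) : ℕ := ∑ i ∈ Finset.Icc 1 n, i ^ k

/-- The set of primes `Q_p`, defined by well-founded recursion (here as an inductive
predicate, which is the unique fixed point since all prime divisors of `q - 1` are
smaller than `q`): a prime `q` belongs to `Q_p` iff `q - 1` is squarefree,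
`p - 1 ∤ q - 1`, and every prime divisor `t` of `q - 1` satisfies `t = p` or `t ∈ Q_p`. -/
inductive QpMem (p : ℕ) : ℕ → Prop
  | intro (q : ℕ) (hq : Nat.Prime q) (h1 : Squarefree (q - 1))
      (h2 : ¬ (p - 1) ∣ (q - 1))
      (h3 : ∀ t : ℕ, Nat.Prime t → t ∣ q - 1 → t ≠ p → QpMem p t) : QpMem p q

open Finset

lemma sum_pow_zmod (q : ℕ) [Fact q.Prime] {k : ℕ} (hk : 0 < k) :
    ∑ x : ZMod q, x ^ k = if (q - 1) ∣ k then -1 else 0 := by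
  classical
  have hcard : Fintype.card (ZMod q) = q := ZMod.card q
  let φ : (ZMod q)ˣ ↪ ZMod q := ⟨fun x ↦ x, fun _ _ h => Units.ext h⟩
  have huniv : univ.map φ = univ \ {0} := by
    ext x
    simpa only [mem_map, mem_univ, Function.Embedding.coeFn_mk, true_and, mem_sdiff,
      mem_singleton, φ] using (show (∃ a : (ZMod q)ˣ, φ a = x) ↔ ¬x = 0 from isUnit_iff_ne_zero)
  calc
    ∑ x : ZMod q, x ^ k = ∑ x ∈ univ \ {(0 : ZMod q)}, x ^ k := by
      rw [← sum_sdiff ({0} : Finset (ZMod q)).subset_univ, sum_singleton,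
        zero_pow hk.ne', add_zero]
    _ = ∑ x : (ZMod q)ˣ, (x ^ k : ZMod q) := by simp [φ, ← huniv, univ.sum_map φ]; rfl
    _ = if (q - 1) ∣ k then -1 else 0 := by
      rw [FiniteField.sum_pow_units (ZMod q) k, hcard]

lemma S_eq_Ioc (k n : ℕ) : S k n = ∑ i ∈ Finset.Ioc 0 n, i ^ k := by
  simp [S, ← Finset.Icc_add_one_left_eq_Ioc]

lemma S_cast (q : ℕ) [NeZero q] (k m : ℕ) :
    ((S k (q * m) : ℕ) : ZMod q) = (m : ZMod q) * ∑ i ∈ Finset.Ioc 0 q, (i : ZMod q) ^ k := by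
  induction m with
  | zero => simp [S]
  | succ m ih =>
    have hsplit : Finset.Ioc 0 (q * m) ∪ Finset.Ioc (q * m) (q * (m + 1)) =
        Finset.Ioc 0 (q * (m + 1)) := by
      apply Finset.Ioc_union_Ioc_eq_Ioc <;> [exact Nat.zero_le _; exact Nat.mul_le_mul_left q (Nat.le_succ m)]
    have hdisj : Disjoint (Finset.Ioc 0 (q * m)) (Finset.Ioc (q * m) (q * (m + 1))) := by
      simp only [Finset.disjoint_left, Finset.mem_Ioc]
      omega
    have : S k (q * (m + 1)) = S k (q * m) + ∑ i ∈ Finset.Ioc (q * m) (q * (m + 1)), i ^ k := by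
      rw [S_eq_Ioc, S_eq_Ioc, ← hsplit, Finset.sum_union hdisj]
    rw [this, Nat.cast_add, ih, Nat.cast_sum]
    simp only [Nat.cast_pow]
    have hmap : Finset.Ioc (q * m) (q * (m + 1)) =
        (Finset.Ioc 0 q).map (addLeftEmbedding (q * m)) := by
      rw [Finset.map_add_left_Ioc]
      congr 1
    have : ∑ i ∈ Finset.Ioc (q * m) (q * (m + 1)), ((i : ZMod q)) ^ k =
        ∑ i ∈ Finset.Ioc 0 q, ((i : ZMod q)) ^ k := by
      rw [hmap, Finset.sum_map]
      apply Finset.sum_congr rfl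
      intro i _
      simp [addLeftEmbedding]
    rw [this]
    push_cast
    ring

lemma Ioc_sum_eq (q : ℕ) [Fact q.Prime] {k : ℕ} (hk : 0 < k) :
    ∑ i ∈ Finset.Ioc 0 q, ((i : ZMod q)) ^ k = ∑ x : ZMod q, x ^ k := by
  classical
  have hq := (Fact.out : q.Prime)
  have h1 : Finset.Ioc 0 q = insert q (Finset.Ioo 0 q) := by
    rw [← Finset.Ioo_insert_right hq.pos]
  rw [h1, Finset.sum_insert (by simp)]
  rw [ZMod.natCast_self, zero_pow hk.ne', zero_add]
  rw [show (∑ x : ZMod q, x ^ k) = (0:ZMod q)^k + ∑ x ∈ Finset.univ \ {0}, x ^ k by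
    rw [← Finset.sum_sdiff ({0} : Finset (ZMod q)).subset_univ, Finset.sum_singleton]; ring]
  rw [zero_pow hk.ne', zero_add]
  refine Finset.sum_nbij' (fun i => ((i : ZMod q))) (fun x => x.val) ?_ ?_ ?_ ?_ ?_
  · intro i hi
    simp only [Finset.mem_Ioo] at hi
    simp only [Finset.mem_sdiff, Finset.mem_univ, Finset.mem_singleton, true_and]
    intro h0
    rw [ZMod.natCast_eq_zero_iff] at h0
    have := Nat.le_of_dvd hi.1 h0
    omega
  · intro x hx
    simp only [Finset.mem_sdiff, Finset.mem_univ, Finset.mem_singleton, true_and] at hx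
    simp only [Finset.mem_Ioo]
    constructor
    · rcases Nat.eq_zero_or_pos x.val with h0 | h0
      · exact absurd ((ZMod.val_eq_zero x).mp h0) hx
      · exact h0
    · exact ZMod.val_lt x
  · intro i hi
    simp only [Finset.mem_Ioo] at hi
    exact ZMod.val_natCast_of_lt hi.2
  · intro x _
    simp [ZMod.natCast_val, ZMod.cast_id]
  · intro i _
    rfl


/-- For a prime `p`, `M_p^(1) ⊆ p · 𝒩_p`: if `p` divides `n` exactly once and
`S_n(n) ≡ p (mod n)`, then `n / p ∈ 𝒩_p`, i.e. `n / p` is squarefree, `p - 1 ∤ n / p`,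
and every prime divisor of `n / p` belongs to `Q_p`. -/
theorem stmt_5 (p : ℕ) (hp : p.Prime) (n : ℕ) (hn : 0 < n)
    (h : S n n ≡ p [MOD n]) (h1 : p ∣ n) (h2 : ¬ p ^ 2 ∣ n) :
    Squarefree (n / p) ∧ ¬ (p - 1) ∣ (n / p) ∧
      ∀ q : ℕ, Nat.Prime q → q ∣ n / p → QpMem p q := by
  have key : ∀ q : ℕ, q.Prime → q ∣ n →
      (p : ZMod q) = (n / q : ℕ) * (if (q - 1) ∣ n then (-1 : ZMod q) else 0) := by
    intro q hq hqn
    haveI : Fact q.Prime := ⟨hq⟩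
    have hmod : S n n ≡ p [MOD q] := (Nat.ModEq.of_dvd hqn h)
    have hcast : ((S n n : ℕ) : ZMod q) = (p : ZMod q) :=
      (ZMod.natCast_eq_natCast_iff _ _ _).mpr hmod
    have hSn : S n n = S n (q * (n / q)) := by rw [Nat.mul_div_cancel' hqn]
    rw [hSn, S_cast q n (n / q), Ioc_sum_eq q hn, sum_pow_zmod q hn] at hcast
    exact hcast.symm
  -- n is squarefree
  have hsqf : Squarefree n := by
    rw [Nat.squarefree_iff_prime_squarefree]
    intro q hq hqq
    have hqn : q ∣ n := dvd_trans (dvd_mul_right q q) hqq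
    have hq2 : q ∣ n / q := (Nat.dvd_div_iff_mul_dvd hqn).mpr hqq
    have hk := key q hq hqn
    have h0 : ((n / q : ℕ) : ZMod q) = 0 := (ZMod.natCast_eq_zero_iff _ _).mpr hq2
    rw [h0, zero_mul] at hk
    have : q ∣ p := by
      haveI : Fact q.Prime := ⟨hq⟩
      exact (ZMod.natCast_eq_zero_iff _ _).mp hk
    have : q = p := (Nat.prime_dvd_prime_iff_eq hq hp).mp this
    subst this
    exact h2 (by rw [sq]; exact hqq)
  have hpm : ¬ p ∣ n / p := by
    intro hd
    exact (by
      rw [Nat.squarefree_iff_prime_squarefree] at hsqf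
      exact hsqf p hp ((Nat.dvd_div_iff_mul_dvd h1).mp hd))
  -- (p-1) does not divide n
  have hpn1 : ¬ (p - 1) ∣ n := by
    intro hd
    have hk := key p hp h1
    rw [if_pos hd, ZMod.natCast_self] at hk
    haveI : Fact p.Prime := ⟨hp⟩
    have h0 : ((n / p : ℕ) : ZMod p) = 0 := by
      have := hk.symm
      rw [mul_neg_one, neg_eq_zero] at this
      exact this
    exact hpm ((ZMod.natCast_eq_zero_iff _ _).mp h0)
  -- for primes q ∣ n with q ≠ p, (q-1) ∣ n
  have hq1n : ∀ q : ℕ, q.Prime → q ∣ n → q ≠ p → (q - 1) ∣ n := by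
    intro q hq hqn hqp
    by_contra hnd
    have hk := key q hq hqn
    rw [if_neg hnd, mul_zero] at hk
    haveI : Fact q.Prime := ⟨hq⟩
    have : q ∣ p := (ZMod.natCast_eq_zero_iff _ _).mp hk
    exact hqp ((Nat.prime_dvd_prime_iff_eq hq hp).mp this)
  have hdvd_np : n / p ∣ n := Nat.div_dvd_of_dvd h1
  refine ⟨hsqf.squarefree_of_dvd hdvd_np, fun hd => hpn1 (hd.trans hdvd_np), ?_⟩
  intro q
  induction q using Nat.strong_induction_on with
  | _ q ih =>
    intro hq hqm
    have hqn : q ∣ n := hqm.trans hdvd_np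
    have hqp : q ≠ p := by rintro rfl; exact hpm hqm
    have hq1 : (q - 1) ∣ n := hq1n q hq hqn hqp
    refine QpMem.intro q hq ?_ ?_ ?_
    · exact hsqf.squarefree_of_dvd hq1
    · intro hd
      exact hpn1 (hd.trans hq1)
    · intro t ht htq htp
      have htn : t ∣ n := htq.trans hq1
      have htpm : t ∣ p * (n / p) := by rwa [Nat.mul_div_cancel' h1]
      have htm : t ∣ n / p := by
        rcases (Nat.Prime.dvd_mul ht).mp htpm with hcase | hcase
        · exact absurd ((Nat.prime_dvd_prime_iff_eq ht hp).mp hcase) htp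
        · exact hcase
      have htlt : t < q := by
        have h2q : 2 ≤ q := hq.two_le
        have : t ≤ q - 1 := Nat.le_of_dvd (by omega) htq
        omega
      exact ih t htlt ht htm
end

section
/- Let p be a prime with p ∉ {2, 3, 7, 43}. Then M_p^(2) is empty; that is, there is no positive integer n divisible by p² but not p³ with S_n(n) ≡ p (mod n). -/
open Finset

lemma Icc_one_eq_Ioc (x : ℕ) : Finset.Icc 1 x = Finset.Ioc 0 x := by
  ext i; simp; omega

/-- Casting `∑_{i ∈ range d} i^k` into `ZMod d` gives the sum over all of `ZMod d`. -/
lemma sum_range_pow_cast (d k : ℕ) [NeZero d] :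
    ∑ i ∈ Finset.range d, ((i : ZMod d)) ^ k = ∑ x : ZMod d, x ^ k := by
  apply Finset.sum_nbij' (i := fun i => ((i : ℕ) : ZMod d)) (j := fun x : ZMod d => x.val)
  · intro a _; exact Finset.mem_univ _
  · intro x _; exact Finset.mem_range.mpr (ZMod.val_lt x)
  · intro a ha; exact ZMod.val_cast_of_lt (Finset.mem_range.mp ha)
  · intro x _; exact ZMod.natCast_zmod_val x
  · intro a _; rfl

lemma sum_Icc_pow_cast (d k : ℕ) [NeZero d] :
    ∑ i ∈ Finset.Icc 1 d, ((i : ZMod d)) ^ k = ∑ x : ZMod d, x ^ k := by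
  have hd : 1 ≤ d := Nat.one_le_iff_ne_zero.mpr (NeZero.ne d)
  have h1 : Finset.Icc 1 d = Finset.Ico 1 (d + 1) := by rw [Finset.Ico_add_one_right_eq_Icc]
  rw [h1, Finset.sum_Ico_succ_top hd, ← sum_range_pow_cast d k, Finset.range_eq_Ico,
    Finset.sum_eq_sum_Ico_succ_bot (show 0 < d by omega)]
  simp [ZMod.natCast_self, add_comm]

lemma S_cast_mul (d k : ℕ) [NeZero d] (m : ℕ) :
    ((S k (d * m) : ℕ) : ZMod d) = (m : ZMod d) * ∑ x : ZMod d, x ^ k := by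
  induction m with
  | zero => simp [S]
  | succ m ih =>
    have hd1 : d * (m + 1) = d * m + d := by ring
    have hsplit : S k (d * (m + 1)) = S k (d * m) + ∑ i ∈ Finset.Ioc (d * m) (d * m + d), i ^ k := by
      unfold S
      rw [Icc_one_eq_Ioc, Icc_one_eq_Ioc, hd1]
      exact (Finset.sum_Ioc_consecutive _ (Nat.zero_le _) (Nat.le_add_right _ _)).symm
    have htail : ((∑ i ∈ Finset.Ioc (d * m) (d * m + d), i ^ k : ℕ) : ZMod d)
        = ∑ x : ZMod d, x ^ k := by
      have hIoc : Finset.Ioc (d * m) (d * m + d)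
          = (Finset.Ioc 0 d).map (addLeftEmbedding (d * m)) := by
        rw [Finset.map_add_left_Ioc]
        norm_num
      push_cast
      rw [hIoc, Finset.sum_map]
      have hcongr : ∀ i ∈ Finset.Ioc 0 d, ((addLeftEmbedding (d * m) i : ℕ) : ZMod d) ^ k
          = ((i : ZMod d)) ^ k := by
        intro i _
        have : ((addLeftEmbedding (d * m) i : ℕ) : ZMod d) = (i : ZMod d) := by
          show (((d * m + i : ℕ)) : ZMod d) = _
          push_cast
          simp
        rw [this]
      rw [Finset.sum_congr rfl hcongr, ← Icc_one_eq_Ioc]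
      exact sum_Icc_pow_cast d k
    rw [hsplit]
    push_cast [ih] at *
    rw [htail]
    ring

lemma S_cast_s7 {n : ℕ} (d k : ℕ) [NeZero d] (hdvd : d ∣ n) :
    ((S k n : ℕ) : ZMod d) = ((n / d : ℕ) : ZMod d) * ∑ x : ZMod d, x ^ k := by
  obtain ⟨m, rfl⟩ := hdvd
  rw [Nat.mul_div_cancel_left m (Nat.pos_of_ne_zero (NeZero.ne d))]
  exact S_cast_mul d k m

/-- If some unit `u` satisfies that `u^n - 1` is a unit, then `∑ x^n = 0`. -/
lemma sum_pow_eq_zero {N : ℕ} [NeZero N] {u : ZMod N} (hu : IsUnit u) {n : ℕ}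
    (h1 : IsUnit (u ^ n - 1)) : ∑ x : ZMod N, x ^ n = 0 := by
  have key : ∑ x : ZMod N, (u * x) ^ n = ∑ x : ZMod N, x ^ n :=
    Fintype.sum_bijective _ hu.unit.mulLeft_bijective _ _ (fun x => rfl)
  simp_rw [mul_pow] at key
  rw [← Finset.mul_sum] at key
  have key2 : (u ^ n - 1) * ∑ x : ZMod N, x ^ n = (u ^ n - 1) * 0 := by
    rw [mul_zero, sub_mul, one_mul, sub_eq_zero]
    exact key
  exact h1.mul_left_cancel key2

/-- Sum of `n`-th powers over `ZMod q²` when `q(q-1) ∣ n`, `2 ≤ n`. -/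
lemma sum_pow_sq {q : ℕ} [NeZero (q ^ 2)] (hq : q.Prime) {n : ℕ} (hn2 : 2 ≤ n) (hdvd : q * (q - 1) ∣ n) :
    ∑ x : ZMod (q ^ 2), x ^ n = ((q ^ 2 - q : ℕ) : ZMod (q ^ 2)) := by
  haveI : Fact q.Prime := ⟨hq⟩
  have hcard : Fintype.card (ZMod (q ^ 2))ˣ = q * (q - 1) := by
    rw [ZMod.card_units_eq_totient, Nat.totient_prime_pow hq (by norm_num)]
    norm_num
  have hunit : ∀ x : ZMod (q ^ 2), IsUnit x → x ^ n = 1 := by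
    intro x hx
    obtain ⟨u, rfl⟩ := hx
    obtain ⟨t, rfl⟩ := hdvd
    rw [← Units.val_pow_eq_pow_val, pow_mul, ← hcard, pow_card_eq_one, one_pow, Units.val_one]
  have hnon : ∀ x : ZMod (q ^ 2), ¬ IsUnit x → x ^ n = 0 := by
    intro x hx
    have hqv : q ∣ x.val := by
      by_contra h
      apply hx
      rw [← ZMod.natCast_zmod_val x]
      exact (ZMod.isUnit_iff_coprime _ _).mpr
        (Nat.Coprime.pow_right _ (Nat.coprime_comm.mp (hq.coprime_iff_not_dvd.mpr h)))
    obtain ⟨c, hc⟩ := hqv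
    have hx2 : x ^ 2 = 0 := by
      have hxc : x = ((q * c : ℕ) : ZMod (q ^ 2)) := by rw [← hc, ZMod.natCast_zmod_val]
      rw [hxc]
      push_cast
      rw [mul_pow, ← Nat.cast_pow, ZMod.natCast_self, zero_mul]
    calc x ^ n = x ^ 2 * x ^ (n - 2) := by rw [← pow_add]; congr 1; omega
    _ = 0 := by rw [hx2, zero_mul]
  have hsum : ∑ x : ZMod (q ^ 2), x ^ n
      = ∑ x : ZMod (q ^ 2), (if IsUnit x then (1 : ZMod (q ^ 2)) else 0) := by
    apply Finset.sum_congr rfl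
    intro x _
    by_cases h : IsUnit x
    · rw [if_pos h, hunit x h]
    · rw [if_neg h, hnon x h]
  have hfilter : (Finset.univ.filter (fun x : ZMod (q ^ 2) => IsUnit x))
      = Finset.univ.map ⟨((↑) : (ZMod (q ^ 2))ˣ → ZMod (q ^ 2)), Units.val_injective⟩ := by
    ext a
    simp only [Finset.mem_filter, Finset.mem_univ, true_and, Finset.mem_map,
      Function.Embedding.coeFn_mk, exists_true_left, IsUnit]
    exact (Finset.mem_filter (p := fun x : ZMod (q ^ 2) => IsUnit x)).trans
      ⟨fun h => h.2, fun h => ⟨Finset.mem_univ _, h⟩⟩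
  have hqq : q ^ 2 - q = q * (q - 1) := by
    have h1 : 1 ≤ q := hq.pos
    have h2 : q ≤ q ^ 2 := Nat.le_self_pow (by norm_num) q
    zify [h1, h2]
    ring
  rw [hsum, Finset.sum_boole, hfilter, Finset.card_map, Finset.card_univ, hcard, hqq]

lemma p_eq_of_not_sub_one_dvd {p n : ℕ} (hp : p.Prime) {q : ℕ} (hq : q.Prime)
    (hqn : q ∣ n) (hS : S n n ≡ p [MOD n]) (h1 : ¬ (q - 1) ∣ n) : q = p := by
  haveI : Fact q.Prime := ⟨hq⟩
  haveI : NeZero q := ⟨hq.pos.ne'⟩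
  obtain ⟨g, hg⟩ := IsCyclic.exists_generator (α := (ZMod q)ˣ)
  have horder : orderOf g = q - 1 := by
    rw [orderOf_eq_card_of_forall_mem_zpowers hg, Nat.card_eq_fintype_card,
      ZMod.card_units_eq_totient, Nat.totient_prime hq]
  have hgn : (g : ZMod q) ^ n ≠ 1 := by
    intro h
    apply h1
    rw [← horder]
    exact orderOf_dvd_of_pow_eq_one
      (Units.ext (by rw [Units.val_pow_eq_pow_val, h, Units.val_one]))
  have hzero : ∑ x : ZMod q, x ^ n = 0 :=
    sum_pow_eq_zero (Units.isUnit g) (isUnit_iff_ne_zero.mpr (sub_ne_zero.mpr hgn))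
  have hcast : ((S n n : ℕ) : ZMod q) = (p : ZMod q) :=
    (ZMod.natCast_eq_natCast_iff _ _ _).mpr (hS.of_dvd hqn)
  rw [S_cast_s7 q n hqn, hzero, mul_zero] at hcast
  exact (Nat.prime_dvd_prime_iff_eq hq hp).mp
    ((ZMod.natCast_eq_zero_iff _ _).mp hcast.symm)

lemma q_eq_of_sq_dvd {p n : ℕ} (hp : p.Prime) (hn : 0 < n) {q : ℕ} (hq : q.Prime)
    (hq2 : q ^ 2 ∣ n) (hq1 : (q - 1) ∣ n) (hS : S n n ≡ p [MOD n]) : q = p := by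
  haveI : Fact q.Prime := ⟨hq⟩
  haveI : NeZero (q ^ 2) := ⟨pow_ne_zero 2 hq.pos.ne'⟩
  have hco : Nat.Coprime q (q - 1) := by
    refine hq.coprime_iff_not_dvd.mpr fun hd => ?_
    have h2 := hq.two_le
    have := Nat.le_of_dvd (by omega) hd
    omega
  have hqdvd : q * (q - 1) ∣ n :=
    Nat.Coprime.mul_dvd_of_dvd_of_dvd hco ((dvd_pow_self q two_ne_zero).trans hq2) hq1
  have hn4 : 2 ≤ n :=
    le_trans (le_trans hq.two_le (Nat.le_self_pow two_ne_zero q)) (Nat.le_of_dvd hn hq2)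
  have hsum := sum_pow_sq hq hn4 hqdvd
  have hcast : ((S n n : ℕ) : ZMod (q ^ 2)) = (p : ZMod (q ^ 2)) :=
    (ZMod.natCast_eq_natCast_iff _ _ _).mpr (hS.of_dvd hq2)
  rw [S_cast_s7 (q ^ 2) n hq2, hsum] at hcast
  have hmap := congrArg (ZMod.castHom (dvd_pow_self q two_ne_zero) (ZMod q)) hcast.symm
  rw [map_natCast, map_mul, map_natCast, map_natCast] at hmap
  have hzero : ((q ^ 2 - q : ℕ) : ZMod q) = 0 := by
    rw [ZMod.natCast_eq_zero_iff]
    exact Nat.dvd_sub (dvd_pow_self q two_ne_zero) dvd_rfl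
  rw [hzero, mul_zero] at hmap
  exact (Nat.prime_dvd_prime_iff_eq hq hp).mp ((ZMod.natCast_eq_zero_iff _ _).mp hmap)

lemma sub_one_dvd_of_sq_dvd {p n : ℕ} (hp : p.Prime) (hp2 : p ^ 2 ∣ n)
    (hS : S n n ≡ p [MOD n]) : (p - 1) ∣ n := by
  by_contra h1
  haveI : Fact p.Prime := ⟨hp⟩
  haveI : NeZero p := ⟨hp.pos.ne'⟩
  haveI : NeZero (p ^ 2) := ⟨pow_ne_zero 2 hp.pos.ne'⟩
  obtain ⟨g, hg⟩ := IsCyclic.exists_generator (α := (ZMod p)ˣ)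
  have horder : orderOf g = p - 1 := by
    rw [orderOf_eq_card_of_forall_mem_zpowers hg, Nat.card_eq_fintype_card,
      ZMod.card_units_eq_totient, Nat.totient_prime hp]
  have hgn : (g : ZMod p) ^ n ≠ 1 := by
    intro h
    apply h1
    rw [← horder]
    exact orderOf_dvd_of_pow_eq_one
      (Units.ext (by rw [Units.val_pow_eq_pow_val, h, Units.val_one]))
  set w : ℕ := ((g : ZMod p)).val with hw
  have hwg : ((w : ℕ) : ZMod p) = (g : ZMod p) := ZMod.natCast_zmod_val _
  have hwp : ¬ p ∣ w := by
    intro hd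
    have h0 : ((w : ℕ) : ZMod p) = 0 := (ZMod.natCast_eq_zero_iff _ _).mpr hd
    rw [hwg] at h0
    exact Units.ne_zero g h0
  have hwu : IsUnit ((w : ℕ) : ZMod (p ^ 2)) :=
    (ZMod.isUnit_iff_coprime _ _).mpr
      (Nat.Coprime.pow_right _ (Nat.coprime_comm.mp (hp.coprime_iff_not_dvd.mpr hwp)))
  set x : ZMod (p ^ 2) := ((w : ℕ) : ZMod (p ^ 2)) with hx
  have hcasthom : ∀ y : ZMod (p ^ 2),
      (ZMod.castHom (dvd_pow_self p two_ne_zero) (ZMod p)) y = ((y.val : ℕ) : ZMod p) := by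
    intro y
    rw [ZMod.castHom_apply, ZMod.natCast_val]
  have himg : (ZMod.castHom (dvd_pow_self p two_ne_zero) (ZMod p)) (x ^ n - 1)
      = (g : ZMod p) ^ n - 1 := by
    rw [map_sub, map_pow, map_one, hx, map_natCast, hwg]
  have hunit2 : IsUnit (x ^ n - 1) := by
    rw [← ZMod.natCast_zmod_val (x ^ n - 1), ZMod.isUnit_iff_coprime]
    apply Nat.Coprime.pow_right
    rw [Nat.coprime_comm]
    apply hp.coprime_iff_not_dvd.mpr
    intro hd
    have h0 : (((x ^ n - 1).val : ℕ) : ZMod p) = 0 :=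
      (ZMod.natCast_eq_zero_iff _ _).mpr hd
    rw [← hcasthom, himg] at h0
    exact (sub_ne_zero.mpr hgn) h0
  have hzero : ∑ y : ZMod (p ^ 2), y ^ n = 0 := sum_pow_eq_zero hwu hunit2
  have hcast : ((S n n : ℕ) : ZMod (p ^ 2)) = (p : ZMod (p ^ 2)) :=
    (ZMod.natCast_eq_natCast_iff _ _ _).mpr (hS.of_dvd hp2)
  rw [S_cast_s7 (p ^ 2) n hp2, hzero, mul_zero] at hcast
  have hdvd : p ^ 2 ∣ p := (ZMod.natCast_eq_zero_iff _ _).mp hcast.symm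
  have hle := Nat.le_of_dvd hp.pos hdvd
  nlinarith [hp.two_le]

set_option maxRecDepth 40000 in
lemma divisors_1806 : Nat.divisors 1806
    = ({1, 2, 3, 6, 7, 14, 21, 42, 43, 86, 129, 258, 301, 602, 903, 1806} : Finset ℕ) := by
  decide

lemma prime_sub_one_dvd_1806 {q : ℕ} (hq : q.Prime) (h : (q - 1) ∣ 1806) :
    q = 2 ∨ q = 3 ∨ q = 7 ∨ q = 43 := by
  have h2 := hq.two_le
  have hmem : q - 1 ∈ Nat.divisors 1806 := Nat.mem_divisors.mpr ⟨h, by norm_num⟩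
  rw [divisors_1806] at hmem
  simp only [Finset.mem_insert, Finset.mem_singleton] at hmem
  have hqv : q = 2 ∨ q = 3 ∨ q = 4 ∨ q = 7 ∨ q = 8 ∨ q = 15 ∨ q = 22 ∨ q = 43 ∨ q = 44 ∨
      q = 87 ∨ q = 130 ∨ q = 259 ∨ q = 302 ∨ q = 603 ∨ q = 904 ∨ q = 1807 := by omega
  rcases hqv with rfl|rfl|rfl|rfl|rfl|rfl|rfl|rfl|rfl|rfl|rfl|rfl|rfl|rfl|rfl|rfl <;>
    first
      | omega
      | (exfalso; revert hq; norm_num)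

/-- For a prime `p ∉ {2, 3, 7, 43}`, the set `M_p^(2)` is empty. -/
theorem stmt_7 (p : ℕ) (hp : p.Prime) (hne : p ∉ ({2, 3, 7, 43} : Set ℕ)) :
    ¬ ∃ n : ℕ, 0 < n ∧ p ^ 2 ∣ n ∧ ¬ p ^ 3 ∣ n ∧ S n n ≡ p [MOD n] := by
  rintro ⟨n, hn, hp2, hp3, hS⟩
  simp only [Set.mem_insert_iff, Set.mem_singleton_iff, not_or] at hne
  have keyC : (p - 1) ∣ n := sub_one_dvd_of_sq_dvd hp hp2 hS
  have keyD : ∀ q : ℕ, q.Prime → q ∣ n → q ≠ p → (q - 1) ∣ n := by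
    intro q hq hqn hnep
    by_contra h
    exact hnep (p_eq_of_not_sub_one_dvd hp hq hqn hS h)
  have keyE : ∀ q : ℕ, q.Prime → q ≠ p → ¬ q ^ 2 ∣ n := by
    intro q hq hnep h2
    exact hnep (q_eq_of_sq_dvd hp hn hq h2
      (keyD q hq ((dvd_pow_self q two_ne_zero).trans h2) hnep) hS)
  have keyF : ∀ m : ℕ, 0 < m → m ∣ n →
      (∀ r : ℕ, r.Prime → r ∣ m → r ≠ p ∧ (r = 2 ∨ r = 3 ∨ r = 7 ∨ r = 43)) → m ∣ 1806 := by
    intro m hm hmn hr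
    rw [← Nat.factorization_le_iff_dvd hm.ne' (by norm_num), Finsupp.le_def]
    intro r
    by_cases hr0 : m.factorization r = 0
    · simp [hr0]
    have hrp : r.Prime := by
      by_contra hnp
      exact hr0 (Nat.factorization_eq_zero_of_not_prime m hnp)
    have hrd : r ∣ m := Nat.dvd_of_factorization_pos hr0
    obtain ⟨hrnep, hrmem⟩ := hr r hrp hrd
    have h1 : m.factorization r ≤ 1 := by
      by_contra hgt
      push_neg at hgt
      have : r ^ 2 ∣ m := (Nat.Prime.pow_dvd_iff_le_factorization hrp hm.ne').mpr hgt
      exact keyE r hrp hrnep (this.trans hmn)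
    have hrd1806 : r ∣ 1806 := by
      rcases hrmem with rfl|rfl|rfl|rfl <;> norm_num
    have h2 : 1 ≤ (1806 : ℕ).factorization r :=
      Nat.Prime.factorization_pos_of_dvd hrp (by norm_num) hrd1806
    omega
  have keyG : ∀ q : ℕ, q.Prime → q ∣ n → q < p → q = 2 ∨ q = 3 ∨ q = 7 ∨ q = 43 := by
    intro q
    induction q using Nat.strong_induction_on with
    | _ q ih =>
      intro hq hqn hqp
      have hq1n : (q - 1) ∣ n := keyD q hq hqn (by omega)
      have hdvd : (q - 1) ∣ 1806 := by
        apply keyF (q - 1) (by have := hq.two_le; omega) hq1n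
        intro r hrp hrd
        have h2q := hq.two_le
        have hrle : r ≤ q - 1 := Nat.le_of_dvd (by omega) hrd
        exact ⟨by omega, ih r (by omega) hrp (hrd.trans hq1n) (by omega)⟩
      exact prime_sub_one_dvd_1806 hq hdvd
  have hplast : (p - 1) ∣ 1806 := by
    apply keyF (p - 1) (by have := hp.two_le; omega) keyC
    intro r hrp hrd
    have h2p := hp.two_le
    have hrle : r ≤ p - 1 := Nat.le_of_dvd (by omega) hrd
    exact ⟨by omega, keyG r hrp (hrd.trans keyC) (by omega)⟩
  have hfin := prime_sub_one_dvd_1806 hp hplast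
  tauto
end
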